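/- Let φ = (1+√5)/2 and φ̄ = (1−√5)/2. For every integer k ≥ 1, the characteristic polynomial of the 2k×2k matrix R_{2k}, viewed over ℝ, factors as det(x·I − R_{2k}) = ∏_{i=1}^{k} (x − (−1)^{k+i} φ^{2i−1}) (x − (−1)^{k+i} φ̄^{2i−1}); that is, the eigenvalues of R_{2k}, with multiplicity, are exactly {(−1)^{k+i} φ^{2i−1}, (−1)^{k+i} φ̄^{2i−1} : i = 1, …, k}. -/

import Mathlib

open Polynomial

/-- `R n` over `ℝ`: the `(i,j)` entry (1-based) is `C(i-1, n-j)`. -/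
def binRR (n : ℕ) : Matrix (Fin n) (Fin n) ℝ :=
  fun i j => (Nat.choose i (n - 1 - j) : ℝ)

namespace Aux16
open Matrix




noncomputable def gp : ℝ := (1 + Real.sqrt 5) / 2
noncomputable def gm : ℝ := (1 - Real.sqrt 5) / 2

lemma gp_mul_gm : gp * gm = -1 := by
  have h : Real.sqrt 5 ^ 2 = 5 := Real.sq_sqrt (by norm_num)
  unfold gp gm; nlinarith [h]

lemma one_sub_gp : (1:ℝ) - gp = gm := by unfold gp gm; ring
lemma one_sub_gm : (1:ℝ) - gm = gp := by unfold gp gm; ring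
lemma gm_sub_gp : gm - gp = -Real.sqrt 5 := by unfold gp gm; ring
lemma sqrt5_ne : Real.sqrt 5 ≠ 0 := by
  have : (0:ℝ) < Real.sqrt 5 := Real.sqrt_pos.mpr (by norm_num)
  linarith

lemma gm_mul_neg_gp : gm * -gp = 1 := by have := gp_mul_gm; nlinarith
lemma gp_mul_neg_gm : gp * -gm = 1 := by have := gp_mul_gm; nlinarith

/-- taylor commutes with powers -/
lemma taylor_pow (r : ℝ) (p : ℝ[X]) (a : ℕ) :
    taylor r (p ^ a) = (taylor r p) ^ a := by
  induction a with
  | zero => simp [taylor_one]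
  | succ a ih => rw [pow_succ, taylor_mul, ih, pow_succ]

lemma taylor_X_sub_C (r c : ℝ) : taylor r (X - C c) = X - C (c - r) := by
  rw [map_sub, taylor_X, taylor_C, add_sub_assoc, ← C_sub]
  have h : r - c = -(c - r) := by ring
  rw [h, C_neg, ← sub_eq_add_neg]

lemma reflect_one' : reflect 0 (1 : ℝ[X]) = 1 := by
  have : (1 : ℝ[X]) = C 1 * X ^ 0 := by simp
  rw [this, reflect_C_mul_X_pow]; simp

lemma reflect_linear (c : ℝ) : reflect 1 (X - C c) = 1 - C c * X := by
  have h : (X : ℝ[X]) - C c = X ^ 1 + C (-c) * X ^ 0 := by simp; ring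
  rw [h, reflect_add, reflect_monomial, reflect_C_mul_X_pow]
  simp [revAt_le]
  ring

lemma reflect_pow_linear (c : ℝ) (a : ℕ) :
    reflect a ((X - C c) ^ a) = (1 - C c * X) ^ a := by
  induction a with
  | zero => simp only [pow_zero]; exact reflect_one'
  | succ a ih =>
      rw [pow_succ]
      rw [reflect_mul (f := (X - C c)^a) (g := X - C c) (F := a) (G := 1)
        (by simp [natDegree_pow]) (by simp), ih, reflect_linear, pow_succ]


lemma gp_sub_gm : gp - gm = Real.sqrt 5 := by unfold gp gm; ring
lemma gm_sub_gm : gm - gm = 0 := by ring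

lemma sum_choose_coeff (N m : ℕ) (p : ℝ[X]) (h : p.natDegree < N) :
    ∑ j ∈ Finset.range N, (Nat.choose j m : ℝ) * p.coeff j = (taylor (1:ℝ) p).coeff m := by
  conv_rhs => rw [p.as_sum_range' N h]
  rw [map_sum, finset_sum_coeff]
  refine Finset.sum_congr rfl fun j hj => ?_
  rw [taylor_monomial, coeff_C_mul, coeff_X_add_C_pow]
  simp only [one_pow, one_mul]
  ring

/-- eigenpolynomial -/
noncomputable def fp (a b : ℕ) : ℝ[X] := (X - C gp) ^ a * (X - C gm) ^ b

lemma fp_natDegree (a b : ℕ) : (fp a b).natDegree = a + b := by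
  unfold fp
  rw [natDegree_mul (pow_ne_zero _ (X_sub_C_ne_zero _)) (pow_ne_zero _ (X_sub_C_ne_zero _))]
  simp [natDegree_pow]

lemma one_sub_gpX_eq : (1 : ℝ[X]) - C gp * X = C (-gp) * (X + C gm) := by
  rw [mul_add, ← C_mul]
  have h : -gp * gm = 1 := by have := gp_mul_gm; nlinarith
  rw [h]
  simp [C_neg]
  ring

lemma one_sub_gmX_eq : (1 : ℝ[X]) - C gm * X = C (-gm) * (X + C gp) := by
  rw [mul_add, ← C_mul]
  have h : -gm * gp = 1 := by have := gp_mul_gm; nlinarith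
  rw [h]
  simp [C_neg]
  ring

lemma taylor_fp (a b : ℕ) :
    taylor (1:ℝ) (fp a b) = (X + C gm) ^ a * (X + C gp) ^ b := by
  unfold fp
  rw [taylor_mul, taylor_pow, taylor_pow, taylor_X_sub_C, taylor_X_sub_C]
  have h1 : gp - 1 = -gm := by have := one_sub_gp; linarith
  have h2 : gm - 1 = -gp := by have := one_sub_gm; linarith
  rw [h1, h2, C_neg, C_neg, sub_neg_eq_add, sub_neg_eq_add]

lemma reflect_fp (a b : ℕ) :
    reflect (a + b) (fp a b)
      = C ((-gp)^a * (-gm)^b) * ((X + C gm) ^ a * (X + C gp) ^ b) := by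
  unfold fp
  rw [reflect_mul (f := (X - C gp)^a) (g := (X - C gm)^b) (F := a) (G := b)
    (by simp [natDegree_pow]) (by simp [natDegree_pow]),
    reflect_pow_linear, reflect_pow_linear, one_sub_gpX_eq, one_sub_gmX_eq,
    mul_pow, mul_pow, ← C_pow, ← C_pow, C_mul]
  ring

/-- The key polynomial identity: taylor 1 of fp is λ times its reflection. -/
lemma taylor_eq_smul_reflect (a b : ℕ) :
    taylor (1:ℝ) (fp a b) = C (gm ^ a * gp ^ b) * reflect (a + b) (fp a b) := by
  rw [taylor_fp, reflect_fp, ← mul_assoc, ← C_mul]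
  have h : gm ^ a * gp ^ b * ((-gp) ^ a * (-gm) ^ b) = 1 := by
    have : gm ^ a * gp ^ b * ((-gp) ^ a * (-gm) ^ b)
        = (gm * -gp) ^ a * (gp * -gm) ^ b := by
      rw [mul_pow, mul_pow]; ring
    rw [this, gm_mul_neg_gp, gp_mul_neg_gm, one_pow, one_pow, one_mul]
  rw [h, C_1, one_mul]


noncomputable def Vm (n : ℕ) : Matrix (Fin n) (Fin n) ℝ :=
  fun i a => (fp a (n - 1 - a)).coeff i

noncomputable def lam (n a : ℕ) : ℝ := gm ^ a * gp ^ (n - 1 - a)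

lemma eigen (n : ℕ) :
    (binRR n)ᵀ * Vm n = Vm n * Matrix.diagonal (fun a : Fin n => lam n (a : ℕ)) := by
  ext i a
  rw [Matrix.mul_apply, Matrix.mul_diagonal]
  have ha : (a : ℕ) < n := a.2
  have hi : (i : ℕ) < n := i.2
  have hab : (a : ℕ) + (n - 1 - (a:ℕ)) = n - 1 := by omega
  have hdeg : (fp (a:ℕ) (n - 1 - (a:ℕ))).natDegree < n := by rw [fp_natDegree]; omega
  have e1 : ∀ j : Fin n, (binRR n)ᵀ i j * Vm n j a
      = (Nat.choose (j:ℕ) (n - 1 - (i:ℕ)) : ℝ) * (fp (a:ℕ) (n - 1 - (a:ℕ))).coeff (j:ℕ) := by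
    intro j; rfl
  rw [Finset.sum_congr rfl (fun j _ => e1 j),
    Fin.sum_univ_eq_sum_range
      (fun j => (Nat.choose j (n - 1 - (i:ℕ)) : ℝ) * (fp (a:ℕ) (n - 1 - (a:ℕ))).coeff j) n,
    sum_choose_coeff n _ _ hdeg, taylor_eq_smul_reflect, hab, coeff_C_mul, coeff_reflect,
    revAt_le (by omega : n - 1 - (i:ℕ) ≤ n - 1)]
  have h2 : n - 1 - (n - 1 - (i:ℕ)) = (i:ℕ) := by omega
  rw [h2]
  show _ = (fp (a:ℕ) (n - 1 - (a:ℕ))).coeff (i:ℕ) * lam n (a:ℕ)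
  unfold lam
  ring

lemma reflect_sum {α : Type*} (N : ℕ) (s : Finset α) (f : α → ℝ[X]) :
    reflect N (∑ a ∈ s, f a) = ∑ a ∈ s, reflect N (f a) := by
  classical
  induction s using Finset.induction_on with
  | empty => simp
  | insert a s h ih => rw [Finset.sum_insert h, Finset.sum_insert h, reflect_add, ih]

lemma det_Vm_ne (n : ℕ) (hn : 0 < n) : (Vm n).det ≠ 0 := by
  intro h0
  obtain ⟨v, hv, hmv⟩ := (Matrix.exists_mulVec_eq_zero_iff (A := ℝ)).mpr h0
  set p : ℝ[X] := ∑ a : Fin n, C (v a) * fp (a:ℕ) (n - 1 - (a:ℕ)) with hp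
  have hdeg : p.natDegree ≤ n - 1 :=
    natDegree_sum_le_of_forall_le _ _ (fun a _ =>
      le_trans (natDegree_C_mul_le _ _) (by rw [fp_natDegree]; omega))
  have hpc : ∀ i : Fin n, p.coeff i = 0 := by
    intro i
    have h := congrFun hmv i
    simp only [Matrix.mulVec, dotProduct, Pi.zero_apply] at h
    rw [hp, finset_sum_coeff]
    rw [← h]
    refine Finset.sum_congr rfl fun a _ => ?_
    rw [coeff_C_mul]
    show v a * Vm n i a = Vm n i a * v a
    ring
  have hp0 : p = 0 := by
    ext i
    rcases lt_or_ge i n with hi | hi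
    · exact hpc ⟨i, hi⟩
    · exact coeff_eq_zero_of_natDegree_lt (by omega)
  have t1 : (0:ℝ[X]) = ∑ a : Fin n,
      C (v a) * ((X - C (Real.sqrt 5)) ^ (a:ℕ) * X ^ (n - 1 - (a:ℕ))) := by
    calc (0:ℝ[X]) = taylor gm p := by rw [hp0]; simp
    _ = ∑ a : Fin n, taylor gm (C (v a) * fp (a:ℕ) (n - 1 - (a:ℕ))) := by rw [hp, map_sum]
    _ = _ := by
        refine Finset.sum_congr rfl fun a _ => ?_
        unfold fp
        rw [taylor_mul, taylor_C, taylor_mul, taylor_pow, taylor_pow, taylor_X_sub_C,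
          taylor_X_sub_C, gp_sub_gm, gm_sub_gm, C_0, sub_zero]
  have t2 : (0:ℝ[X]) = ∑ a : Fin n, C (v a) * (1 - C (Real.sqrt 5) * X) ^ (a:ℕ) := by
    calc (0:ℝ[X]) = reflect (n-1) 0 := by simp
    _ = ∑ a : Fin n, reflect (n-1)
        (C (v a) * ((X - C (Real.sqrt 5)) ^ (a:ℕ) * X ^ (n - 1 - (a:ℕ)))) := by
        rw [← reflect_sum, ← t1]
    _ = _ := by
        refine Finset.sum_congr rfl fun a _ => ?_
        have ha : (a:ℕ) < n := a.2
        set b := n - 1 - (a:ℕ) with hb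
        have hab : n - 1 = (a:ℕ) + b := by omega
        rw [reflect_C_mul, hab,
          reflect_mul (f := (X - C (Real.sqrt 5)) ^ (a:ℕ)) (g := X ^ b)
            (by simp [natDegree_pow]) (by simp [natDegree_pow]),
          reflect_pow_linear, reflect_monomial, revAt_le (le_refl _), Nat.sub_self, pow_zero,
          mul_one]
  set q : ℝ[X] := ∑ a : Fin n, C (v a) * X ^ (a:ℕ) with hq
  have hcomp : q.comp (1 - C (Real.sqrt 5) * X) = 0 := by
    rw [hq, sum_comp]
    have e : ∀ a : Fin n, (C (v a) * X ^ (a:ℕ)).comp (1 - C (Real.sqrt 5) * X)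
        = C (v a) * (1 - C (Real.sqrt 5) * X) ^ (a:ℕ) := fun a => by
      rw [mul_comp, C_comp, pow_comp, X_comp]
    rw [Finset.sum_congr rfl (fun a _ => e a), ← t2]
  have hgC : (1 - C (Real.sqrt 5) * X : ℝ[X]) ≠ C ((1 - C (Real.sqrt 5) * X : ℝ[X]).coeff 0) := by
    intro hgg
    have h1 := congrArg (fun p : ℝ[X] => p.coeff 1) hgg
    simp [coeff_one, coeff_C, sqrt5_ne] at h1
  have hq0 : q = 0 := by
    rcases comp_eq_zero_iff.mp hcomp with h | ⟨_, h⟩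
    · exact h
    · exact absurd h hgC
  apply hv
  funext a
  have hcoeffq : q.coeff (a:ℕ) = v a := by
    rw [hq, finset_sum_coeff]
    rw [Finset.sum_eq_single a (fun b _ hba => ?_) (fun habs => absurd (Finset.mem_univ a) habs)]
    · rw [coeff_C_mul, coeff_X_pow, if_pos rfl, mul_one]
    · rw [coeff_C_mul, coeff_X_pow, if_neg (fun hh => hba (Fin.ext hh.symm)), mul_zero]
  rw [hq0] at hcoeffq
  simpa using hcoeffq.symm


lemma charpoly_transpose {n : ℕ} (A : Matrix (Fin n) (Fin n) ℝ) :
    Aᵀ.charpoly = A.charpoly := by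
  unfold Matrix.charpoly
  rw [← Matrix.det_transpose (charmatrix A)]
  congr 1
  ext i j
  by_cases h : i = j
  · subst h; simp [charmatrix_apply_eq, Matrix.transpose_apply]
  · rw [Matrix.transpose_apply, charmatrix_apply_ne _ _ _ h,
      charmatrix_apply_ne _ _ _ (Ne.symm h), Matrix.transpose_apply]

lemma charpoly_conj {n : ℕ} (M V D : Matrix (Fin n) (Fin n) ℝ)
    (hdet : V.det ≠ 0) (h : M * V = V * D) : M.charpoly = D.charpoly := by
  have hscal : ∀ B : Matrix (Fin n) (Fin n) ℝ[X],
      Matrix.scalar (Fin n) (X : ℝ[X]) * B = B * Matrix.scalar (Fin n) (X : ℝ[X]) := by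
    intro B
    ext i j
    simp [Matrix.scalar, Matrix.mul_diagonal, Matrix.diagonal_mul, mul_comm]
  have hmap : ∀ A B : Matrix (Fin n) (Fin n) ℝ,
      (A * B).map (C : ℝ →+* ℝ[X]) = A.map C * B.map C := fun A B => by
    exact Matrix.map_mul
  have key : charmatrix M * V.map (C : ℝ →+* ℝ[X]) = V.map C * charmatrix D := by
    unfold charmatrix
    rw [sub_mul, mul_sub, hscal]
    congr 1
    show (M.map C) * (V.map C) = V.map C * D.map C
    rw [← hmap, ← hmap, h]
  have hdetkey := congrArg Matrix.det key
  rw [Matrix.det_mul, Matrix.det_mul] at hdetkey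
  have hVC : (V.map (C : ℝ →+* ℝ[X])).det = C V.det := ((C : ℝ →+* ℝ[X]).map_det V).symm
  rw [hVC] at hdetkey
  have hCne : (C V.det : ℝ[X]) ≠ 0 := fun hc => hdet (by simpa using hc)
  unfold Matrix.charpoly
  rw [mul_comm (C V.det)] at hdetkey
  exact mul_right_cancel₀ hCne hdetkey

lemma charpoly_diag {n : ℕ} (d : Fin n → ℝ) :
    (Matrix.diagonal d).charpoly = ∏ i : Fin n, (X - C (d i)) := by
  rw [Matrix.charpoly_of_upperTriangular _ (Matrix.blockTriangular_diagonal d)]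
  simp [Matrix.diagonal_apply_eq]


lemma neg_one_pow_add_two_mul (a t : ℕ) : (-1:ℝ)^(a + 2*t) = (-1:ℝ)^a := by
  rw [pow_add, pow_mul]; norm_num

lemma pow_pair1 (a m : ℕ) : gm ^ a * gp ^ (a + (2*m+1)) = (-1:ℝ)^a * gp^(2*m+1) := by
  rw [pow_add, ← mul_assoc, ← mul_pow, mul_comm gm gp, gp_mul_gm]

lemma pow_pair2 (a m : ℕ) : gm ^ (a + (2*m+1)) * gp ^ a = (-1:ℝ)^a * gm^(2*m+1) := by
  rw [pow_add, mul_comm, ← mul_assoc, ← mul_pow, gp_mul_gm]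



end Aux16

open Aux16 in
theorem stmt_16 (k : ℕ) (hk : 1 ≤ k) :
    (binRR (2 * k)).charpoly =
      ∏ i ∈ Finset.Icc 1 k,
        ((X - C ((-1 : ℝ) ^ (k + i) * ((1 + Real.sqrt 5) / 2) ^ (2 * i - 1))) *
          (X - C ((-1 : ℝ) ^ (k + i) * ((1 - Real.sqrt 5) / 2) ^ (2 * i - 1)))) := by
  have hn : 0 < 2 * k := by omega
  rw [show ((1 + Real.sqrt 5)/2 : ℝ) = gp from rfl, show ((1 - Real.sqrt 5)/2 : ℝ) = gm from rfl,
    ← charpoly_transpose (binRR (2*k)),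
    charpoly_conj _ (Vm (2*k)) (Matrix.diagonal fun a : Fin (2*k) => lam (2*k) (a:ℕ))
      (det_Vm_ne _ hn) (eigen (2*k)),
    charpoly_diag,
    Fin.prod_univ_eq_prod_range (fun a => X - C (lam (2*k) a)) (2*k),
    two_mul,
    Finset.prod_range_add (fun j => X - C (lam (k+k) j)) k k,
    Finset.prod_mul_distrib,
    ← Finset.Ico_add_one_right_eq_Icc 1 k,
    Finset.prod_Ico_eq_prod_range, Finset.prod_Ico_eq_prod_range]
  simp only [Nat.add_sub_cancel]
  congr 1
  · -- φ part
    rw [← Finset.prod_range_reflect (fun j =>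
        X - C ((-1:ℝ)^(k + (1 + j)) * gp ^ (2 * (1 + j) - 1))) k]
    refine Finset.prod_congr rfl fun j hj => ?_
    have hjk : j < k := Finset.mem_range.mp hj
    congr 1
    unfold lam
    have e1 : k + k - 1 - j = j + (2*(k-1-j)+1) := by omega
    have e2 : 2*(1+(k-1-j))-1 = 2*(k-1-j)+1 := by omega
    have e3 : k + (1+(k-1-j)) = j + 2*(k-j) := by omega
    rw [e1, pow_pair1, e2, e3, neg_one_pow_add_two_mul]
  · -- φ̄ part
    refine Finset.prod_congr rfl fun j hj => ?_
    have hjk : j < k := Finset.mem_range.mp hj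
    congr 1
    unfold lam
    have e1 : k + j = (k-1-j) + (2*j+1) := by omega
    have e2 : k + k - 1 - (k + j) = k - 1 - j := by omega
    have e3 : 2*(1+j)-1 = 2*j+1 := by omega
    have e4 : k + (1+j) = (k-1-j) + 2*(j+1) := by omega
    rw [e2, e1, pow_pair2, e3, e4, neg_one_pow_add_two_mul]
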